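/- Let ρ : (0,∞) → (0,∞), let h : (0,∞) → (0,∞) be continuous with h(1) > 0, and let p : ℝ → [0,∞) be an even probability density on ℝ. Suppose that for every x > 0, p(x/σ)/(σ·ρ(σ)) → h(x) as σ → 0⁺, and that ∫₀^∞ min(x², 1)·h(x) dx < ∞. Then there exist d ∈ (0,2) and a slowly varying function L : (0,∞) → (0,∞) (i.e. L(a·u)/L(u) → 1 as u → ∞ for every a > 0) such that h(x) = h(1)·x^{-d-1} for all x > 0 and ρ(σ) = σ^d · L(σ^{-1}) for all σ in a neighborhood of 0. -/

import Mathlib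

open MeasureTheory Filter Real Topology

/-- Every symmetric sparse scale family has rate `ρ(σ) = σ^d L(σ⁻¹)` with `L` slowly varying,
and an inverse-power exceedance density `h(x) = h(1) x^{-d-1}`, for some `0 < d < 2`. -/
theorem sparse_scale_family_inverse_power
    (ρ h p : ℝ → ℝ)
    (hρpos : ∀ σ : ℝ, 0 < σ → 0 < ρ σ)
    (hhpos : ∀ x : ℝ, 0 < x → 0 < h x)
    (hhcont : ContinuousOn h (Set.Ioi 0))
    (hh1 : 0 < h 1)
    (hp_nonneg : ∀ x, 0 ≤ p x)
    (hp_even : ∀ x, p (-x) = p x)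
    (hp_prob : ∫ x : ℝ, p x = 1)
    (hlim : ∀ x : ℝ, 0 < x →
      Tendsto (fun σ : ℝ => p (x / σ) / (σ * ρ σ)) (𝓝[>] 0) (𝓝 (h x)))
    (hint : IntegrableOn (fun x : ℝ => min (x ^ 2) 1 * h x) (Set.Ioi 0)) :
    ∃ d ∈ Set.Ioo (0 : ℝ) 2, ∃ L : ℝ → ℝ,
      (∀ u : ℝ, 0 < u → 0 < L u) ∧
      (∀ a : ℝ, 0 < a → Tendsto (fun u : ℝ => L (a * u) / L u) atTop (𝓝 1)) ∧
      (∀ x : ℝ, 0 < x → h x = h 1 * x ^ (-d - 1)) ∧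
      (∀ᶠ σ in 𝓝[>] (0 : ℝ), ρ σ = σ ^ d * L σ⁻¹) := by
  have hpos_mem : ∀ᶠ σ : ℝ in 𝓝[>] (0:ℝ), (0:ℝ) < σ := self_mem_nhdsWithin
  -- the key ratio limits
  have key : ∀ a : ℝ, 0 < a → ∀ x : ℝ, 0 < x →
      Tendsto (fun σ : ℝ => ((σ / a) * ρ (σ / a)) / (σ * ρ σ)) (𝓝[>] 0)
        (𝓝 (h (a * x) / h x)) := by
    intro a ha x hx
    have hf : Tendsto (fun σ : ℝ => p ((a * x) / σ) / (σ * ρ σ)) (𝓝[>] 0) (𝓝 (h (a * x))) :=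
      hlim (a * x) (mul_pos ha hx)
    have hmap : Tendsto (fun σ : ℝ => σ / a) (𝓝[>] 0) (𝓝[>] 0) := by
      apply tendsto_nhdsWithin_of_tendsto_nhds_of_eventually_within
      · have : Tendsto (fun σ : ℝ => σ / a) (𝓝 (0:ℝ)) (𝓝 ((0:ℝ) / a)) :=
          (continuous_id.div_const a).tendsto 0
        simpa using this.mono_left nhdsWithin_le_nhds
      · exact hpos_mem.mono fun σ hσ => div_pos hσ ha
    have hg : Tendsto (fun σ : ℝ => p ((a * x) / σ) / ((σ / a) * ρ (σ / a))) (𝓝[>] 0)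
        (𝓝 (h x)) := by
      have := (hlim x hx).comp hmap
      refine this.congr fun σ => ?_
      simp only [Function.comp]
      rw [div_div_eq_mul_div, mul_comm x a]
    have hfg := hf.div hg (ne_of_gt (hhpos x hx))
    have hev : ∀ᶠ σ : ℝ in 𝓝[>] 0,
        (p ((a * x) / σ) / (σ * ρ σ)) / (p ((a * x) / σ) / ((σ / a) * ρ (σ / a)))
          = ((σ / a) * ρ (σ / a)) / (σ * ρ σ) := by
      have hfc : ∀ᶠ σ : ℝ in 𝓝[>] 0, 0 < p ((a * x) / σ) / (σ * ρ σ) :=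
        hf.eventually_const_lt (hhpos _ (mul_pos ha hx))
      filter_upwards [hpos_mem, hfc] with σ hσ hfσ
      have hA : (0:ℝ) < σ * ρ σ := mul_pos hσ (hρpos σ hσ)
      have hB : (0:ℝ) < (σ / a) * ρ (σ / a) :=
        mul_pos (div_pos hσ ha) (hρpos _ (div_pos hσ ha))
      have hpne : p ((a * x) / σ) ≠ 0 := by
        intro hz
        rw [hz, zero_div] at hfσ
        exact lt_irrefl 0 hfσ
      field_simp
    exact Tendsto.congr' hev hfg
  -- functional equation
  have funEq : ∀ a : ℝ, 0 < a → ∀ x : ℝ, 0 < x → h (a * x) * h 1 = h a * h x := by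
    intro a ha x hx
    have h1 := key a ha x hx
    have h2 := key a ha 1 one_pos
    rw [mul_one] at h2
    have := tendsto_nhds_unique h1 h2
    rw [div_eq_div_iff (ne_of_gt (hhpos x hx)) (ne_of_gt hh1)] at this
    linarith [this]
  -- solve it: h x = h 1 * x ^ c
  set F : ℝ → ℝ := fun t => Real.log (h (Real.exp t)) - Real.log (h 1) with hF
  have hFadd : ∀ s t : ℝ, F (s + t) = F s + F t := by
    intro s t
    have hfe := funEq (Real.exp s) (Real.exp_pos s) (Real.exp t) (Real.exp_pos t)
    rw [← Real.exp_add] at hfe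
    have hl := congrArg Real.log hfe
    rw [Real.log_mul (ne_of_gt (hhpos _ (Real.exp_pos _))) (ne_of_gt hh1),
        Real.log_mul (ne_of_gt (hhpos _ (Real.exp_pos _))) (ne_of_gt (hhpos _ (Real.exp_pos _)))]
        at hl
    simp only [hF]
    linarith [hl]
  have hFcont : Continuous F := by
    have h1 : Continuous fun t : ℝ => h (Real.exp t) :=
      hhcont.comp_continuous Real.continuous_exp fun t => Set.mem_Ioi.mpr (Real.exp_pos t)
    have h2 : Continuous fun t : ℝ => Real.log (h (Real.exp t)) :=
      Real.continuousOn_log.comp_continuous h1 fun t =>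
        Set.mem_compl_singleton_iff.mpr (ne_of_gt (hhpos _ (Real.exp_pos t)))
    exact h2.sub continuous_const
  set φ : ℝ →+ ℝ := AddMonoidHom.mk' F (fun s t => hFadd s t) with hφ
  have hlin : ∀ t : ℝ, F t = t * F 1 := by
    intro t
    have h0 := (φ.toRealLinearMap hFcont).map_smul t 1
    have h1 : F (t * 1) = t * F 1 := h0
    simpa using h1
  set c : ℝ := F 1 with hc
  have hform : ∀ x : ℝ, 0 < x → h x = h 1 * x ^ c := by
    intro x hx
    have h1 : F (Real.log x) = Real.log x * c := hlin (Real.log x)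
    simp only [hF, Real.exp_log hx] at h1
    have : Real.log (h x) = Real.log (h 1) + Real.log x * c := by linarith
    have := congrArg Real.exp this
    rw [Real.exp_log (hhpos x hx), Real.exp_add, Real.exp_log hh1] at this
    rw [this, Real.rpow_def_of_pos hx]
  -- integrability constraints
  have hstrip : ∀ (e : ℝ) (s : Set ℝ), MeasurableSet s →
      IntegrableOn (fun x : ℝ => h 1 * x ^ e) s → IntegrableOn (fun x : ℝ => x ^ e) s := by
    intro e s hs hI
    have hI' : IntegrableOn (fun x : ℝ => (h 1)⁻¹ * (h 1 * x ^ e)) s := hI.const_mul _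
    refine hI'.congr_fun (fun x _ => ?_) hs
    dsimp only
    rw [inv_mul_cancel_left₀ (ne_of_gt hh1)]
  have hc_lt : c < -1 := by
    have I1 : IntegrableOn (fun x : ℝ => min (x ^ 2) 1 * h x) (Set.Ioi 1) :=
      hint.mono_set (Set.Ioi_subset_Ioi zero_le_one)
    have I2 : IntegrableOn (fun x : ℝ => h 1 * x ^ c) (Set.Ioi 1) := by
      refine I1.congr_fun (fun x hx => ?_) measurableSet_Ioi
      have hx1 : (1:ℝ) < x := hx
      have hx0 : (0:ℝ) < x := lt_trans one_pos hx1
      dsimp only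
      rw [min_eq_right (by nlinarith : (1:ℝ) ≤ x ^ 2), one_mul, hform x hx0]
    have I3 := hstrip c _ measurableSet_Ioi I2
    exact (integrableOn_Ioi_rpow_iff one_pos).mp I3
  have hc_gt : -3 < c := by
    have I1 : IntegrableOn (fun x : ℝ => min (x ^ 2) 1 * h x) (Set.Ioo 0 1) :=
      hint.mono_set Set.Ioo_subset_Ioi_self
    have I2 : IntegrableOn (fun x : ℝ => h 1 * x ^ (c + 2)) (Set.Ioo 0 1) := by
      refine I1.congr_fun (fun x hx => ?_) measurableSet_Ioo
      obtain ⟨hx0, hx1⟩ := hx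
      dsimp only
      rw [min_eq_left (by nlinarith : x ^ 2 ≤ 1), hform x hx0]
      rw [Real.rpow_add hx0, Real.rpow_two]
      ring
    have I3 := hstrip (c+2) _ measurableSet_Ioo I2
    have := (intervalIntegral.integrableOn_Ioo_rpow_iff one_pos).mp I3
    linarith
  set d : ℝ := -c - 1 with hd
  have hdc : -d - 1 = c := by rw [hd]; ring
  -- the ratio limit for ρ
  have hQ : ∀ a : ℝ, 0 < a →
      Tendsto (fun σ : ℝ => ρ (σ / a) / ρ σ) (𝓝[>] 0) (𝓝 (a ^ (c + 1))) := by
    intro a ha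
    have h1 := key a ha 1 one_pos
    rw [mul_one] at h1
    have h2 : Tendsto (fun σ : ℝ => a * (((σ / a) * ρ (σ / a)) / (σ * ρ σ))) (𝓝[>] 0)
        (𝓝 (a * (h a / h 1))) := h1.const_mul a
    have heq : h a / h 1 = a ^ c := by
      rw [hform a ha]
      field_simp
    have hval : a * (h a / h 1) = a ^ (c + 1) := by
      rw [heq, Real.rpow_add_one (ne_of_gt ha), mul_comm]
    rw [hval] at h2
    refine h2.congr' ?_
    filter_upwards [hpos_mem] with σ hσ
    have hρ1 := hρpos σ hσ
    have hρ2 := hρpos (σ / a) (div_pos hσ ha)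
    field_simp
  -- define L
    -- L u := ρ (u⁻¹) * u ^ d  for u > 0
  refine ⟨d, ⟨by linarith, by linarith⟩,
    fun u => if 0 < u then ρ u⁻¹ * u ^ d else 1, ?_, ?_, ?_, ?_⟩
  · intro u hu
    simp only [if_pos hu]
    exact mul_pos (hρpos _ (inv_pos.mpr hu)) (Real.rpow_pos_of_pos hu d)
  · intro a ha
    have hcomp : Tendsto (fun u : ℝ => u⁻¹) atTop (𝓝[>] (0:ℝ)) := by
      apply tendsto_nhdsWithin_of_tendsto_nhds_of_eventually_within
      · exact tendsto_inv_atTop_zero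
      · filter_upwards [eventually_gt_atTop (0:ℝ)] with u hu
        exact inv_pos.mpr hu
    have h1 : Tendsto (fun u : ℝ => ρ (u⁻¹ / a) / ρ u⁻¹) atTop (𝓝 (a ^ (c + 1))) :=
      (hQ a ha).comp hcomp
    have h2 : Tendsto (fun u : ℝ => (ρ (u⁻¹ / a) / ρ u⁻¹) * a ^ d) atTop
        (𝓝 (a ^ (c + 1) * a ^ d)) := h1.mul_const _
    have hval : a ^ (c + 1) * a ^ d = 1 := by
      rw [← Real.rpow_add ha]
      have : c + 1 + d = 0 := by rw [hd]; ring
      rw [this, Real.rpow_zero]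
    rw [hval] at h2
    refine h2.congr' ?_
    filter_upwards [eventually_gt_atTop (0:ℝ)] with u hu
    have hau : 0 < a * u := mul_pos ha hu
    simp only [if_pos hu, if_pos hau]
    have hinv : (a * u)⁻¹ = u⁻¹ / a := by
      rw [mul_inv, div_eq_mul_inv, mul_comm]
    rw [hinv, Real.mul_rpow ha.le hu.le]
    have hρu := hρpos u⁻¹ (inv_pos.mpr hu)
    have hud := Real.rpow_pos_of_pos hu d
    rw [div_mul_eq_mul_div, div_eq_div_iff (ne_of_gt hρu) (ne_of_gt (mul_pos hρu hud))]
    ring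
  · intro x hx
    rw [hdc]
    exact hform x hx
  · filter_upwards [hpos_mem] with σ hσ
    have hσi : 0 < σ⁻¹ := inv_pos.mpr hσ
    simp only [if_pos hσi, inv_inv]
    rw [Real.inv_rpow hσ.le]
    have hσd : (0:ℝ) < σ ^ d := Real.rpow_pos_of_pos hσ d
    field_simp
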